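/- Let φ be an order automorphism of (E, E₊) and suppose a, b, c, d are integers such that φ(r, x, y) = (5r, ax + by, cx + dy) for all (r, x, y) ∈ E. Then the matrix (a b; c d) is congruent modulo 9 to one of the three matrices (5 0; 0 2), (5 0; 3 2), (5 0; 6 2). -/

import Mathlib

/-- The additive subgroup `E` of `ℝ × ℤ × ℤ`: all triples `(r, x, y)` such that
`r = (j + k√3)/5^(6i)`, `x ≡ j (mod 9)` and `y ≡ k (mod 3)` for some integers `i, j, k`. -/
def Eset : Set (ℝ × ℤ × ℤ) :=
  {p | ∃ i j k : ℤ, p.1 = ((j : ℝ) + (k : ℝ) * Real.sqrt 3) / (5 : ℝ) ^ (6 * i) ∧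
    p.2.1 ≡ j [ZMOD 9] ∧ p.2.2 ≡ k [ZMOD 3]}

/-- The positive cone `E₊ = {(r, x, y) ∈ E : r > 0} ∪ {(0, 0, 0)}`. -/
def Epos : Set (ℝ × ℤ × ℤ) :=
  {p | p ∈ Eset ∧ 0 < p.1} ∪ {0}

/-- An order automorphism of `(E, E₊)`: an additive group automorphism of `E`
(a bijection of `E` onto itself which is additive on `E`) with `φ(E₊) = E₊`. -/
structure IsOrderAuto (φ : ℝ × ℤ × ℤ → ℝ × ℤ × ℤ) : Prop where
  bijOn : Set.BijOn φ Eset Eset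
  addOn : ∀ p ∈ Eset, ∀ q ∈ Eset, φ (p + q) = φ p + φ q
  posEq : φ '' Epos = Epos

lemma my_irr3 : Irrational (Real.sqrt 3) := by
  have := Nat.Prime.irrational_sqrt (p := 3) (by norm_num)
  simpa using this

lemma my_rat_part (j k : ℤ) (q : ℚ) (h : (j:ℝ) + (k:ℝ) * Real.sqrt 3 = (q:ℝ)) :
    k = 0 ∧ (j:ℝ) = (q:ℝ) := by
  by_cases hk : k = 0
  · refine ⟨hk, ?_⟩
    rw [hk] at h; simpa using h
  · exfalso
    have h1 : Irrational ((k:ℝ) * Real.sqrt 3) := my_irr3.intCast_mul hk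
    have h2 : Irrational ((j:ℝ) + (k:ℝ) * Real.sqrt 3) := h1.intCast_add j
    rw [h] at h2
    exact (Rat.not_irrational q) h2

lemma my_int_eq_zpow (j n : ℤ) (h : (j:ℝ) = (5:ℝ) ^ n) : 0 ≤ n ∧ j = 5 ^ n.toNat := by
  have hn : 0 ≤ n := by
    by_contra hn
    push_neg at hn
    have h1 : (5:ℝ) ^ n < 1 := zpow_lt_one_of_neg₀ (by norm_num) hn
    have h0 : (0:ℝ) < (5:ℝ) ^ n := by positivity
    have hj0 : (0:ℝ) < (j:ℝ) := h ▸ h0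
    have hj1 : (j:ℝ) < 1 := h ▸ h1
    have hz : (0:ℤ) < j := by exact_mod_cast hj0
    have hz1 : (1:ℤ) ≤ j := hz
    have : (1:ℝ) ≤ (j:ℝ) := by exact_mod_cast hz1
    linarith
  refine ⟨hn, ?_⟩
  have h2 : (j:ℝ) = ((5 ^ n.toNat : ℤ) : ℝ) := by
    rw [h]
    push_cast
    rw [← zpow_natCast, Int.toNat_of_nonneg hn]
  exact_mod_cast h2

lemma my_pow6_mod9 (m : ℕ) : ((5:ℤ)^6)^m ≡ 1 [ZMOD 9] := by
  calc ((5:ℤ)^6)^m ≡ 1^m [ZMOD 9] := Int.ModEq.pow m (by decide)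
    _ = 1 := one_pow m

lemma my_pow6_mod3 (m : ℕ) : ((5:ℤ)^6)^m ≡ 1 [ZMOD 3] := by
  calc ((5:ℤ)^6)^m ≡ 1^m [ZMOD 3] := Int.ModEq.pow m (by decide)
    _ = 1 := one_pow m

lemma my_mem_pow (p : ℝ × ℤ × ℤ) (hp : p ∈ Eset) (e : ℕ) (he : e ≤ 1)
    (h1 : p.1 = 5 ^ e) : p.2.1 ≡ 5 ^ e [ZMOD 9] ∧ p.2.2 ≡ 0 [ZMOD 3] := by
  obtain ⟨i, j, k, hr, hx, hy⟩ := hp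
  have h50 : (5:ℝ) ^ (6*i) ≠ 0 := by positivity
  have heq : (j:ℝ) + (k:ℝ) * Real.sqrt 3 = (5:ℝ) ^ ((e:ℤ) + 6*i) := by
    have h2 : ((j:ℝ) + (k:ℝ) * Real.sqrt 3) = (5:ℝ)^e * (5:ℝ)^(6*i) := by
      rw [h1] at hr
      field_simp at hr
      linarith [hr]
    rw [h2, zpow_add₀ (by norm_num : (5:ℝ) ≠ 0), zpow_natCast]
  have hq : (j:ℝ) + (k:ℝ) * Real.sqrt 3 = (((5:ℚ) ^ ((e:ℤ) + 6*i) : ℚ) : ℝ) := by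
    rw [heq]; push_cast; ring
  obtain ⟨hk0, hj⟩ := my_rat_part j k _ hq
  have hj' : (j:ℝ) = (5:ℝ) ^ ((e:ℤ) + 6*i) := by
    rw [hj]; push_cast; ring
  obtain ⟨hnn, hjval⟩ := my_int_eq_zpow j _ hj'
  have hi0 : 0 ≤ i := by omega
  have htn : ((e:ℤ) + 6*i).toNat = e + 6 * i.toNat := by omega
  rw [htn] at hjval
  have hjm : j ≡ 5 ^ e [ZMOD 9] := by
    rw [hjval, pow_add, pow_mul]
    calc (5:ℤ)^e * ((5^6)^i.toNat) ≡ 5^e * 1 [ZMOD 9] :=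
          Int.ModEq.mul_left _ (my_pow6_mod9 i.toNat)
      _ = 5^e := mul_one _
  constructor
  · exact hx.trans hjm
  · rw [hk0] at hy; exact hy

lemma my_mem_sqrt3 (p : ℝ × ℤ × ℤ) (hp : p ∈ Eset) (h1 : p.1 = 5 * Real.sqrt 3) :
    p.2.1 ≡ 0 [ZMOD 9] ∧ p.2.2 ≡ 2 [ZMOD 3] := by
  obtain ⟨i, j, k, hr, hx, hy⟩ := hp
  have h50 : (5:ℝ) ^ (6*i) ≠ 0 := by positivity
  have hs3 : Real.sqrt 3 * Real.sqrt 3 = 3 := Real.mul_self_sqrt (by norm_num)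
  have heq : ((3*k:ℤ):ℝ) + (j:ℝ) * Real.sqrt 3 = (5:ℝ) ^ ((1:ℤ) + 6*i) * 3 := by
    have h2 : ((j:ℝ) + (k:ℝ) * Real.sqrt 3) = 5 * Real.sqrt 3 * (5:ℝ)^(6*i) := by
      rw [h1] at hr
      field_simp at hr
      linarith [hr]
    have h3 : ((j:ℝ) + (k:ℝ) * Real.sqrt 3) * Real.sqrt 3
        = 5 * Real.sqrt 3 * (5:ℝ)^(6*i) * Real.sqrt 3 := by rw [h2]
    have h4 : (j:ℝ) * Real.sqrt 3 + (k:ℝ) * 3 = 5 * (5:ℝ)^(6*i) * 3 := by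
      linear_combination h3 + (5 * (5:ℝ)^(6*i) - (k:ℝ)) * hs3
    rw [zpow_add₀ (by norm_num : (5:ℝ) ≠ 0)]
    push_cast
    simp only [zpow_one]
    linarith
  have hq : ((3*k:ℤ):ℝ) + (j:ℝ) * Real.sqrt 3
      = ((((5:ℚ) ^ ((1:ℤ) + 6*i) * 3 : ℚ)) : ℝ) := by
    rw [heq]; push_cast; ring
  obtain ⟨hj0, hk3⟩ := my_rat_part (3*k) j _ hq
  have hk' : ((k:ℝ)) = (5:ℝ) ^ ((1:ℤ) + 6*i) := by
    have : ((3*k:ℤ):ℝ) = (5:ℝ) ^ ((1:ℤ) + 6*i) * 3 := by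
      rw [hk3]; push_cast; ring
    push_cast at this
    linarith
  obtain ⟨hnn, hkval⟩ := my_int_eq_zpow k _ hk'
  have hi0 : 0 ≤ i := by omega
  have htn : ((1:ℤ) + 6*i).toNat = 1 + 6 * i.toNat := by omega
  rw [htn] at hkval
  have hkm : k ≡ 2 [ZMOD 3] := by
    rw [hkval, pow_add, pow_mul]
    calc (5:ℤ)^1 * ((5^6)^i.toNat) ≡ 5^1 * 1 [ZMOD 3] :=
          Int.ModEq.mul_left _ (my_pow6_mod3 i.toNat)
      _ = 5 := mul_one _
      _ ≡ 2 [ZMOD 3] := by decide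
  constructor
  · rw [hj0] at hx; exact hx
  · exact hy.trans hkm

/-- If `φ` is an order automorphism of `(E, E₊)` with `φ(r, x, y) = (5r, ax + by, cx + dy)`
on `E`, then the matrix `(a b; c d)` is congruent mod 9 to one of
`(5 0; 0 2)`, `(5 0; 3 2)`, `(5 0; 6 2)`. -/
theorem stmt_12 (φ : ℝ × ℤ × ℤ → ℝ × ℤ × ℤ) (hφ : IsOrderAuto φ) (a b c d : ℤ)
    (h : ∀ p ∈ Eset, φ p = (5 * p.1, a * p.2.1 + b * p.2.2, c * p.2.1 + d * p.2.2)) :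
    (a ≡ 5 [ZMOD 9] ∧ b ≡ 0 [ZMOD 9] ∧ c ≡ 0 [ZMOD 9] ∧ d ≡ 2 [ZMOD 9]) ∨
    (a ≡ 5 [ZMOD 9] ∧ b ≡ 0 [ZMOD 9] ∧ c ≡ 3 [ZMOD 9] ∧ d ≡ 2 [ZMOD 9]) ∨
    (a ≡ 5 [ZMOD 9] ∧ b ≡ 0 [ZMOD 9] ∧ c ≡ 6 [ZMOD 9] ∧ d ≡ 2 [ZMOD 9]) := by
  -- basic memberships
  have mem110 : ((1:ℝ), (1:ℤ), (0:ℤ)) ∈ Eset := by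
    refine ⟨0, 1, 0, ?_, by decide, by decide⟩
    norm_num
  have memS : ((Real.sqrt 3 : ℝ), (0:ℤ), (1:ℤ)) ∈ Eset := by
    refine ⟨0, 0, 1, ?_, by decide, by decide⟩
    norm_num
  have mem550 : ((5:ℝ), (5:ℤ), (0:ℤ)) ∈ Eset := by
    refine ⟨0, 5, 0, ?_, by decide, by decide⟩
    norm_num
  have mem553 : ((5:ℝ), (5:ℤ), (3:ℤ)) ∈ Eset := by
    refine ⟨0, 5, 0, ?_, by decide, by decide⟩
    norm_num
  have mem5140 : ((5:ℝ), (14:ℤ), (0:ℤ)) ∈ Eset := by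
    refine ⟨0, 5, 0, ?_, by decide, by decide⟩
    norm_num
  -- a ≡ 5 [9], c ≡ 0 [3]
  have hA := hφ.bijOn.mapsTo mem110
  rw [h _ mem110] at hA
  simp only [mul_one, mul_zero, add_zero] at hA
  have hac := my_mem_pow _ hA 1 le_rfl (by norm_num)
  simp only [pow_one] at hac
  obtain ⟨ha5, hc3⟩ := hac
  -- b ≡ 0 [9], d ≡ 2 [3]
  have hB := hφ.bijOn.mapsTo memS
  rw [h _ memS] at hB
  simp only [mul_one, mul_zero, zero_add] at hB
  have hbd := my_mem_sqrt3 _ hB rfl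
  simp only [] at hbd
  obtain ⟨hb0, hd3⟩ := hbd
  -- preimages
  have getpre : ∀ t : ℝ × ℤ × ℤ, t ∈ Eset → t.1 = 5 →
      ∃ x y : ℤ, (9:ℤ) ∣ 1 - x ∧ (3:ℤ) ∣ 0 - y ∧
        a * x + b * y = t.2.1 ∧ c * x + d * y = t.2.2 := by
    intro t ht ht1
    obtain ⟨q, hq, hfq⟩ := hφ.bijOn.surjOn ht
    rw [h _ hq] at hfq
    have hq1 : q.1 = 1 := by
      have : 5 * q.1 = t.1 := congrArg Prod.fst hfq
      rw [ht1] at this; linarith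
    have hmem := my_mem_pow q hq 0 (by norm_num) (by simpa using hq1)
    simp only [pow_zero] at hmem
    obtain ⟨hx1, hy0⟩ := hmem
    refine ⟨q.2.1, q.2.2, Int.ModEq.dvd hx1, Int.ModEq.dvd hy0, ?_, ?_⟩
    · exact congrArg (fun p => p.2.1) hfq
    · exact congrArg (fun p => p.2.2) hfq
  obtain ⟨x, y, hx9, hy3, e1, e2⟩ := getpre _ mem550 rfl
  obtain ⟨x', y', hx9', hy3', e3, e4⟩ := getpre _ mem553 rfl
  obtain ⟨x'', y'', hx9'', hy3'', e5, e6⟩ := getpre _ mem5140 rfl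
  norm_num at e1 e2 e3 e4 e5 e6
  -- differences
  obtain ⟨u, hu⟩ : (9:ℤ) ∣ x' - x := by omega
  obtain ⟨v, hv⟩ : (3:ℤ) ∣ y' - y := by omega
  obtain ⟨u', hu'⟩ : (9:ℤ) ∣ x'' - x := by omega
  obtain ⟨v', hv'⟩ : (3:ℤ) ∣ y'' - y := by omega
  have E1 : 3 * (a * u) + b * v = 0 := by
    have h9 : 9 * (a * u) + 3 * (b * v) = 0 := by
      linear_combination e3 - e1 - a * hu - b * hv
    linarith
  have E2 : 3 * (c * u) + d * v = 1 := by
    have h9 : 9 * (c * u) + 3 * (d * v) = 3 := by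
      linear_combination e4 - e2 - c * hu - d * hv
    linarith
  have E3 : 3 * (a * u') + b * v' = 3 := by
    have h9 : 9 * (a * u') + 3 * (b * v') = 9 := by
      linear_combination e5 - e1 - a * hu' - b * hv'
    linarith
  have E4 : 3 * (c * u') + d * v' = 0 := by
    have h9 : 9 * (c * u') + 3 * (d * v') = 0 := by
      linear_combination e6 - e2 - c * hu' - d * hv'
    linarith
  -- determinant
  have t1 : (3*(a*u) + b*v) * (3*(c*u') + d*v') = 0 := by rw [E1]; ring
  have t2 : (3*(a*u') + b*v') * (3*(c*u) + d*v) = 3 := by rw [E3, E2]; ring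
  have key3 : (a*d - b*c) * (u*v' - u'*v) * 3 = -3 := by linear_combination t1 - t2
  have keyu : (a*d - b*c) * (-(u*v' - u'*v)) = 1 := by linarith [key3]
  have hdet : a*d - b*c = 1 ∨ a*d - b*c = -1 :=
    Int.isUnit_iff.mp (IsUnit.of_mul_eq_one _ keyu)
  -- mod computations
  have da5 : (9:ℤ) ∣ 5 - a := Int.ModEq.dvd ha5
  have dc3 : (3:ℤ) ∣ 0 - c := Int.ModEq.dvd hc3
  have db0 : (9:ℤ) ∣ 0 - b := Int.ModEq.dvd hb0
  have dd3 : (3:ℤ) ∣ 2 - d := Int.ModEq.dvd hd3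
  have hdm : (9:ℤ) ∣ (a*d - b*c) - 5*d := by
    have h1 : (9:ℤ) ∣ (a - 5) * d := Dvd.dvd.mul_right (by omega) d
    have h2 : (9:ℤ) ∣ b * c := Dvd.dvd.mul_right (by omega) c
    have : (a*d - b*c) - 5*d = (a - 5)*d - b*c := by ring
    rw [this]
    exact dvd_sub h1 h2
  have hd9 : (9:ℤ) ∣ 2 - d := by
    rcases hdet with h1 | h1
    · rw [h1] at hdm; omega
    · rw [h1] at hdm; omega
  have hc9 : (9:ℤ) ∣ 0 - c ∨ (9:ℤ) ∣ 3 - c ∨ (9:ℤ) ∣ 6 - c := by omega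
  have modof : ∀ m s t : ℤ, m ∣ s - t → t ≡ s [ZMOD m] := by
    intro m s t hst
    exact (Int.modEq_iff_dvd.mpr hst)
  rcases hc9 with hc | hc | hc
  · exact Or.inl ⟨modof 9 5 a da5, modof 9 0 b db0, modof 9 0 c hc, modof 9 2 d hd9⟩
  · exact Or.inr (Or.inl ⟨modof 9 5 a da5, modof 9 0 b db0, modof 9 3 c hc, modof 9 2 d hd9⟩)
  · exact Or.inr (Or.inr ⟨modof 9 5 a da5, modof 9 0 b db0, modof 9 6 c hc, modof 9 2 d hd9⟩)
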